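/- Let (I,J) ∈ O, let y ∈ A_{I,J}, and for t ∈ [0,1] set y_t = (1−t)y + tb. Then δ^{ẏ_t} = (1−t)·δ^{ẏ} + t·(1/(2n)). -/

import Mathlib

open Finset

/-- The maximum of `|z i - z j|` over `j ∈ S`, with the convention `max ∅ = 0`. -/
noncomputable def maxDist {n : ℕ} (z : Fin n → ℝ) (i : Fin n) (S : Finset (Fin n)) : ℝ :=
  if h : S.Nonempty then S.sup' h (fun j => |z i - z j|) else 0

/-- `ν^z_{I,i}`: the minimum over all subsets `S ⊆ I \ {i}` with `|S| = ⌊n/3⌋` of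
`max_{j ∈ S} |z i - z j|`, with the convention `min ∅ = 0`. -/
noncomputable def nu (n : ℕ) (z : Fin n → ℝ) (I : Finset (Fin n)) (i : Fin n) : ℝ :=
  if h : ((I.erase i).powersetCard (n / 3)).Nonempty then
    ((I.erase i).powersetCard (n / 3)).inf' h (maxDist z i)
  else 0

/-- `ν^z_I = max_{i ∈ I} ν^z_{I,i}`, with the convention `max ∅ = 0`. -/
noncomputable def nuMax (n : ℕ) (z : Fin n → ℝ) (I : Finset (Fin n)) : ℝ :=
  if h : I.Nonempty then I.sup' h (nu n z I) else 0

/-- `δ^z = (max{t₁,…,tₙ} - min{t₁,…,tₙ}) / n`. -/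
noncomputable def delta (n : ℕ) (z : Fin n → ℝ) : ℝ :=
  if h : (Finset.univ : Finset (Fin n)).Nonempty then
    (Finset.univ.sup' h z - Finset.univ.inf' h z) / n
  else 0

/-- `ẏ = (t₁, …, t_{n-1}, 0) ∈ ℝⁿ` for `y = (t₁, …, t_{n-1}) ∈ ℝ^{n-1}`. -/
def ydot (n : ℕ) (y : Fin (n - 1) → ℝ) : Fin n → ℝ :=
  fun i => if h : (i : ℕ) < n - 1 then y ⟨i, h⟩ else 0

/-- The open cube `(-1, 1)^m`, the interior of `D^m = [-1,1]^m`. -/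
def IntD (m : ℕ) : Set (Fin m → ℝ) := {y | ∀ i, y i ∈ Set.Ioo (-1 : ℝ) 1}

/-- `(I, J) ∈ O`: `I` and `J` are disjoint nonempty subsets of `[n]` with `I ∪ J = [n]`,
`|I| > n/3`, and `|J| > n/3`. -/
def memO (n : ℕ) (I J : Finset (Fin n)) : Prop :=
  I.Nonempty ∧ J.Nonempty ∧ Disjoint I J ∧ I ∪ J = Finset.univ ∧
    (n : ℝ) < 3 * I.card ∧ (n : ℝ) < 3 * J.card

/-- The set `A_{I,J}`. -/
def setAIJ (n : ℕ) (I J : Finset (Fin n)) : Set (Fin (n - 1) → ℝ) :=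
  {y | y ∈ IntD (n - 1) ∧ ∀ i ∈ I, ∀ j ∈ J,
    delta n (ydot n y) < ydot n y j - ydot n y i ∧
    nu n (ydot n y) I i < delta n (ydot n y) ∧
    nu n (ydot n y) J j < delta n (ydot n y)}

/-- The set `A = { y ∈ Int(D^{n-1}) : ν^{ẏ}_{[n]} < δ^{ẏ} }`. -/
def setA (n : ℕ) : Set (Fin (n - 1) → ℝ) :=
  {y | y ∈ IntD (n - 1) ∧ nuMax n (ydot n y) Finset.univ < delta n (ydot n y)}

/-- The point `b ∈ ℝ^{n-1}` associated to `(I, J) ∈ O`: if `n ∈ J` then `b_i = -1/2` for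
`i ∈ I` and `b_j = 0` for `j ∈ J \ {n}`; if `n ∈ I` then `b_i = 0` for `i ∈ I \ {n}` and
`b_j = 1/2` for `j ∈ J`. -/
noncomputable def bpt (n : ℕ) (I J : Finset (Fin n)) : Fin (n - 1) → ℝ :=
  fun i =>
    if (⟨n - 1, by have := i.isLt; omega⟩ : Fin n) ∈ J then
      (if Fin.castLE (Nat.sub_le n 1) i ∈ I then -(1 / 2 : ℝ) else 0)
    else
      (if Fin.castLE (Nat.sub_le n 1) i ∈ I then 0 else (1 / 2 : ℝ))

/-- For `(I,J) ∈ O`, `y ∈ A_{I,J}` and `t ∈ [0,1]`, with `y_t = (1-t)y + tb`, one has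
`δ^{ẏ_t} = (1-t)·δ^{ẏ} + t·(1/(2n))`. -/
theorem stmt_8 (n : ℕ) (hn : 2 ≤ n) (I J : Finset (Fin n)) (hIJ : memO n I J)
    (y : Fin (n - 1) → ℝ) (hy : y ∈ setAIJ n I J) (t : ℝ) (ht : t ∈ Set.Icc (0 : ℝ) 1) :
    delta n (ydot n ((1 - t) • y + t • bpt n I J)) =
      (1 - t) * delta n (ydot n y) + t * (1 / (2 * n)) := by
  obtain ⟨hI, hJ, hdisj, hunion, hI3, hJ3⟩ := hIJ
  obtain ⟨ht0, ht1⟩ := ht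
  have hn0 : (0:ℕ) < n := by omega
  have huniv : (Finset.univ : Finset (Fin n)).Nonempty := ⟨⟨0, hn0⟩, Finset.mem_univ _⟩
  have hnR : (n:ℝ) ≠ 0 := Nat.cast_ne_zero.mpr (by omega)
  set z := ydot n y with hz
  set last : Fin n := ⟨n-1, by omega⟩ with hlast
  set bI : ℝ := if last ∈ J then -(1/2) else 0 with hbI
  set bJ : ℝ := if last ∈ J then 0 else (1/2) with hbJ
  set c : Fin n → ℝ := fun k => if k ∈ I then bI else bJ with hc
  have hbdiff : bJ - bI = 1/2 := by
    by_cases h : last ∈ J <;> simp [hbI, hbJ, h]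
  have hbIJ : bI ≤ bJ := by nlinarith [hbdiff]
  set w := fun k => (1-t) * z k + t * c k with hw
  have hweq : ydot n ((1 - t) • y + t • bpt n I J) = w := by
    funext k
    by_cases hk : (k:ℕ) < n - 1
    · have hcast : Fin.castLE (Nat.sub_le n 1) (⟨(k:ℕ), hk⟩ : Fin (n-1)) = k := by
        apply Fin.ext; rfl
      simp only [ydot, hk, dif_pos, Pi.add_apply, Pi.smul_apply, smul_eq_mul, hw, hz, hc,
        bpt, hcast]
      by_cases hkJ : last ∈ J <;> by_cases hkI : k ∈ I <;>
        simp [hkJ, hkI, hbI, hbJ, ← hlast]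
    · have hkv : (k:ℕ) = n - 1 := by have := k.isLt; omega
      have hkl : k = last := Fin.ext hkv
      have hcl : c k = 0 := by
        by_cases h : last ∈ J
        · have : k ∉ I := by
            rw [hkl]; exact fun hi => (Finset.disjoint_left.mp hdisj hi h)
          simp [hc, this, hbJ, h]
        · have : k ∈ I := by
            rw [hkl]
            have := Finset.mem_univ last
            rw [← hunion, Finset.mem_union] at this
            tauto
          simp [hc, this, hbI, h]
      have hzk : z k = 0 := by simp [hz, ydot, hk]
      simp only [ydot, hk, dif_neg, not_false_iff, hw, hcl, hzk]
      ring
  -- basic facts about z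
  set M := Finset.univ.sup' huniv z with hM
  set m := Finset.univ.inf' huniv z with hm
  have hmM : m ≤ M := le_trans (Finset.inf'_le _ (Finset.mem_univ (⟨0, hn0⟩ : Fin n)))
    (Finset.le_sup' _ (Finset.mem_univ (⟨0, hn0⟩ : Fin n)))
  have hdelta : delta n z = (M - m) / n := by simp [delta, huniv, hM, hm]
  have hdnn : 0 ≤ delta n z := by
    rw [hdelta]; apply div_nonneg (by linarith) (Nat.cast_nonneg n)
  have hzij : ∀ i ∈ I, ∀ j ∈ J, z i < z j := by
    intro i hi j hj
    have := (hy.2 i hi j hj).1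
    rw [← hz] at this
    linarith
  -- M attained in J, m attained in I
  obtain ⟨k0, -, hk0⟩ := Finset.exists_mem_eq_sup' huniv z
  obtain ⟨k1, -, hk1⟩ := Finset.exists_mem_eq_inf' huniv z
  have hMJ : ∃ j ∈ J, z j = M := by
    by_cases h : k0 ∈ J
    · exact ⟨k0, h, hk0.symm⟩
    · exfalso
      have hk0I : k0 ∈ I := by
        have := Finset.mem_univ k0
        rw [← hunion, Finset.mem_union] at this; tauto
      obtain ⟨j, hj⟩ := hJ
      have h1 := hzij k0 hk0I j hj
      have h2 : z j ≤ M := Finset.le_sup' z (Finset.mem_univ j)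
      have hMk : M = z k0 := hM.trans hk0
      linarith
  have hmI : ∃ i ∈ I, z i = m := by
    by_cases h : k1 ∈ I
    · exact ⟨k1, h, hk1.symm⟩
    · exfalso
      have hk1J : k1 ∈ J := by
        have := Finset.mem_univ k1
        rw [← hunion, Finset.mem_union] at this; tauto
      obtain ⟨i, hi⟩ := hI
      have h1 := hzij i hi k1 hk1J
      have h2 : m ≤ z i := Finset.inf'_le z (Finset.mem_univ i)
      have hmk : m = z k1 := hm.trans hk1
      linarith
  have hcle : ∀ k, bI ≤ c k ∧ c k ≤ bJ := by
    intro k; by_cases h : k ∈ I <;> simp [hc, h] <;> linarith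
  have hsup : Finset.univ.sup' huniv w = (1-t) * M + t * bJ := by
    apply le_antisymm
    · apply Finset.sup'_le
      intro k _
      have h1 : z k ≤ M := Finset.le_sup' z (Finset.mem_univ k)
      have h2 := (hcle k).2
      have := mul_le_mul_of_nonneg_left h1 (by linarith : (0:ℝ) ≤ 1 - t)
      have := mul_le_mul_of_nonneg_left h2 ht0
      simp only [hw]; linarith
    · obtain ⟨j0, hj0, hj0M⟩ := hMJ
      have hj0I : j0 ∉ I := fun hi => (Finset.disjoint_left.mp hdisj hi hj0)
      have : w j0 = (1-t) * M + t * bJ := by simp [hw, hj0M, hc, hj0I]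
      rw [← this]; exact Finset.le_sup' w (Finset.mem_univ j0)
  have hinf : Finset.univ.inf' huniv w = (1-t) * m + t * bI := by
    apply le_antisymm
    · obtain ⟨i0, hi0, hi0m⟩ := hmI
      have : w i0 = (1-t) * m + t * bI := by simp [hw, hi0m, hc, hi0]
      rw [← this]; exact Finset.inf'_le w (Finset.mem_univ i0)
    · apply Finset.le_inf'
      intro k _
      have h1 : m ≤ z k := Finset.inf'_le z (Finset.mem_univ k)
      have h2 := (hcle k).1
      have := mul_le_mul_of_nonneg_left h1 (by linarith : (0:ℝ) ≤ 1 - t)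
      have := mul_le_mul_of_nonneg_left h2 ht0
      simp only [hw]; linarith
  rw [hweq]
  have : delta n w = ((1-t) * M + t * bJ - ((1-t) * m + t * bI)) / n := by
    simp [delta, huniv, hsup, hinf]
  rw [this, hdelta]
  have : (1-t) * M + t * bJ - ((1-t) * m + t * bI) = (1-t)*(M-m) + t*(1/2) := by
    rw [← hbdiff]; ring
  rw [this]
  field_simp
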